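/- Let F : 2^{[N]} → ℝ be a submodular function with F([N]) = 0 and let f be its Lovász extension. For x, x′ ∈ ℝ^N, write x ⇀ x′ if for all u, v ∈ [N], x_u > x_v implies x′_u > x′_v. If x ⇀ x′, then ∇f(x′) ⊆ ∇f(x), and ⟨y, x⟩ = f(x) for every y ∈ ∇f(x′). -/

import Mathlib

open scoped BigOperators
open Finset

noncomputable section

/-- A set function on the ground set `Fin N` is submodular:
`F(S ∪ T) + F(S ∩ T) ≤ F(S) + F(T)` for all `S, T`. -/
def Submodular {N : ℕ} (F : Finset (Fin N) → ℝ) : Prop :=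
  ∀ S T : Finset (Fin N), F (S ∪ T) + F (S ∩ T) ≤ F S + F T

/-- The Lovász extension of a set function, written in its (tie-breaking independent)
level-set integral form, which agrees with the usual sorted-sum definition
`f(x) = Σ_{j=1}^{N-1} F({i_1,…,i_j})(x_{i_j} − x_{i_{j+1}})` for a nonincreasing
ordering `x_{i_1} ≥ … ≥ x_{i_N}`. -/
def lovasz {N : ℕ} (F : Finset (Fin N) → ℝ) (x : Fin N → ℝ) : ℝ :=
  ∫ t in (⨅ v, x v)..(⨆ v, x v), F (Finset.univ.filter fun v => t < x v)

/-- The inner product `⟨y, x⟩ = Σ_v y_v x_v`. -/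
def dotp {N : ℕ} (y x : Fin N → ℝ) : ℝ := ∑ v, y v * x v

/-- The set of subgradients of `f : ℝ^N → ℝ` at `x`. -/
def subgradients {N : ℕ} (f : (Fin N → ℝ) → ℝ) (x : Fin N → ℝ) : Set (Fin N → ℝ) :=
  {y | ∀ x', dotp y (x' - x) ≤ f x' - f x}

/-- The base polytope of a set function: `y(S) ≤ F(S)` for all `S ⊆ V` and `y(V) = 0`. -/
def basePolytope {N : ℕ} (F : Finset (Fin N) → ℝ) : Set (Fin N → ℝ) :=
  {y | (∀ S : Finset (Fin N), ∑ v ∈ S, y v ≤ F S) ∧ ∑ v, y v = 0}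

/-- The sign function (`sgn 0 = 0`). -/
def sgn (a : ℝ) : ℝ := if 0 < a then 1 else if a < 0 then -1 else 0

/-- A vector is nonconstant. -/
def Nonconstant {N : ℕ} (x : Fin N → ℝ) : Prop := ∃ u v, x u ≠ x v

/-- Restriction of a vector to a subset of vertices (zero outside that subset). -/
def restrictVec {N : ℕ} (x : Fin N → ℝ) (C : Finset (Fin N)) : Fin N → ℝ :=
  fun v => if v ∈ C then x v else 0

/-- Euclidean norm on `ℝ^N`. -/
def l2norm {N : ℕ} (z : Fin N → ℝ) : ℝ := Real.sqrt (∑ v, z v ^ 2)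

/-- Supremum norm on `ℝ^N`. -/
def linfNorm {N : ℕ} (z : Fin N → ℝ) : ℝ := ⨆ v, |z v|

/-- A submodular hypergraph `G = (V, E, w, μ)` on `V = Fin N`: hyperedges `E`,
positive vertex weights `μ`, and for each hyperedge `e ∈ E` a scalar `θ_e > 0`
together with a normalized symmetric submodular weight `w_e : 2^e → [0,1]`
(extended to all of `2^V` by `w_e(S) = w_e(S ∩ e)`). -/
structure SubmodularHypergraph (N : ℕ) where
  E : Finset (Finset (Fin N))
  μ : Fin N → ℝ
  μ_pos : ∀ v, 0 < μ v
  θ : Finset (Fin N) → ℝ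
  θ_pos : ∀ e ∈ E, 0 < θ e
  w : Finset (Fin N) → Finset (Fin N) → ℝ
  w_inter : ∀ e ∈ E, ∀ S, w e S = w e (S ∩ e)
  w_submodular : ∀ e ∈ E, Submodular (w e)
  w_nonneg : ∀ e ∈ E, ∀ S, 0 ≤ w e S
  w_le_one : ∀ e ∈ E, ∀ S, w e S ≤ 1
  w_empty : ∀ e ∈ E, w e ∅ = 0
  w_normalized : ∀ e ∈ E, ∃ S ⊆ e, w e S = 1
  w_symm : ∀ e ∈ E, ∀ S ⊆ e, w e S = w e (e \ S)

namespace SubmodularHypergraph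

variable {N : ℕ} (G : SubmodularHypergraph N)

/-- `vol(S) = Σ_{v ∈ S} μ_v`. -/
def vol (S : Finset (Fin N)) : ℝ := ∑ v ∈ S, G.μ v

/-- `vol(∂S) = Σ_{e ∈ E} θ_e w_e(S)`. -/
def volB (S : Finset (Fin N)) : ℝ := ∑ e ∈ G.E, G.θ e * G.w e S

/-- The Lovász extension `f_e` of the hyperedge weight `w_e`. -/
def fe (e : Finset (Fin N)) (x : Fin N → ℝ) : ℝ := lovasz (G.w e) x

/-- `Q_p(x) = Σ_{e ∈ E} θ_e f_e(x)^p`. -/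
def Q (p : ℝ) (x : Fin N → ℝ) : ℝ := ∑ e ∈ G.E, G.θ e * G.fe e x ^ p

/-- `‖x‖_{ℓp,μ}^p = Σ_v μ_v |x_v|^p`. -/
def normLpPow (p : ℝ) (x : Fin N → ℝ) : ℝ := ∑ v, G.μ v * |x v| ^ p

/-- `G` is connected: `vol(∂S) > 0` for all nonempty proper `S ⊂ V`. -/
def Connected : Prop :=
  ∀ S : Finset (Fin N), S.Nonempty → S ≠ Finset.univ → 0 < G.volB S

/-- Vertices `u, v` are connected in `G`: every `S` with `u ∈ S`, `v ∉ S` has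
`vol(∂S) > 0`. -/
def VertConnected (u v : Fin N) : Prop :=
  ∀ S : Finset (Fin N), u ∈ S → v ∉ S → 0 < G.volB S

/-- The conductance `c(S) = vol(∂S) / min{vol(S), vol(V∖S)}`. -/
def conductance (S : Finset (Fin N)) : ℝ := G.volB S / min (G.vol S) (G.vol Sᶜ)

/-- The degree `d_v = Σ_{e ∈ E : v ∈ e} θ_e`. -/
def degree (v : Fin N) : ℝ := ∑ e ∈ G.E.filter (fun e => v ∈ e), G.θ e

/-- `τ = max_v d_v / μ_v`. -/
def tau : ℝ := ⨆ v, G.degree v / G.μ v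

/-- `G` is homogeneous: `w_e(S) = 1` for every `S ∈ 2^e ∖ {∅, e}`. -/
def Homogeneous : Prop :=
  ∀ e ∈ G.E, ∀ S ⊆ e, S ≠ ∅ → S ≠ e → G.w e S = 1

/-- `(λ, x)` is an eigenpair of the `p`-Laplacian `△_p` (for `p > 1` and for `p = 1`). -/
def IsEigenpair (p lam : ℝ) (x : Fin N → ℝ) : Prop :=
  x ≠ 0 ∧
  ∃ y : Finset (Fin N) → Fin N → ℝ,
    (∀ e ∈ G.E, y e ∈ basePolytope (G.w e) ∧
        ∀ z ∈ basePolytope (G.w e), dotp z x ≤ dotp (y e) x) ∧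
    (if 1 < p then
        ∀ v, ∑ e ∈ G.E, G.θ e * G.fe e x ^ (p - 1) * y e v
              = lam * G.μ v * (|x v| ^ (p - 1) * sgn (x v))
      else
        (∀ v, x v ≠ 0 → ∑ e ∈ G.E, G.θ e * y e v = lam * G.μ v * sgn (x v)) ∧
        (∀ v, x v = 0 → |∑ e ∈ G.E, G.θ e * y e v| ≤ lam * G.μ v))

/-- Vertices `u, v` are connected inside the induced sub-hypergraph `G[W]`
(the boundary volume in `G[W]` of `S ⊆ W` equals `Σ_{e ∈ E} θ_e w_e(S)`). -/
def VertConnectedIn (W : Finset (Fin N)) (u v : Fin N) : Prop :=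
  u = v ∨ ∀ S ⊆ W, u ∈ S → v ∉ S → 0 < G.volB S

/-- `C` is (the vertex set of) a connected component of the induced sub-hypergraph `G[W]`. -/
def IsComponent (W C : Finset (Fin N)) : Prop :=
  C ⊆ W ∧ C.Nonempty ∧
    (∀ u ∈ C, ∀ v ∈ C, G.VertConnectedIn W u v) ∧
    (∀ u ∈ C, ∀ v ∈ W, G.VertConnectedIn W u v → v ∈ C)

end SubmodularHypergraph

def posSupp {N : ℕ} (x : Fin N → ℝ) : Finset (Fin N) := Finset.univ.filter fun v => 0 < x v
def negSupp {N : ℕ} (x : Fin N → ℝ) : Finset (Fin N) := Finset.univ.filter fun v => x v < 0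
def nonnegSupp {N : ℕ} (x : Fin N → ℝ) : Finset (Fin N) := Finset.univ.filter fun v => 0 ≤ x v
def nonposSupp {N : ℕ} (x : Fin N → ℝ) : Finset (Fin N) := Finset.univ.filter fun v => x v ≤ 0

namespace SubmodularHypergraph

variable {N : ℕ} (G : SubmodularHypergraph N)

/-- The number of strong nodal domains of `x` (positive ones plus negative ones). -/
def strongNodalCount (x : Fin N → ℝ) : ℕ :=
  {C : Finset (Fin N) | G.IsComponent (posSupp x) C}.ncard +
  {C : Finset (Fin N) | G.IsComponent (negSupp x) C}.ncard

/-- The number of weak nodal domains of `x` (positive ones plus negative ones). -/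
def weakNodalCount (x : Fin N → ℝ) : ℕ :=
  {C : Finset (Fin N) | G.IsComponent (nonnegSupp x) C}.ncard +
  {C : Finset (Fin N) | G.IsComponent (nonposSupp x) C}.ncard

/-- The collection of strong nodal domains of `x`. -/
def strongNodalDomains (x : Fin N → ℝ) : Set (Finset (Fin N)) :=
  {C | G.IsComponent (posSupp x) C ∨ G.IsComponent (negSupp x) C}

/-- The collection of weak nodal domains of `x`. -/
def weakNodalDomains (x : Fin N → ℝ) : Set (Finset (Fin N)) :=
  {C | G.IsComponent (nonnegSupp x) C ∨ G.IsComponent (nonposSupp x) C}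

/-- `Z_{p,μ}(x) = min_c ‖x − c·𝟙‖_{ℓp,μ}^p`. -/
def Z (p : ℝ) (x : Fin N → ℝ) : ℝ := ⨅ c : ℝ, ∑ v, G.μ v * |x v - c| ^ p

/-- `𝓡_p(x) = Q_p(x) / Z_{p,μ}(x)`. -/
def Rq (p : ℝ) (x : Fin N → ℝ) : ℝ := G.Q p x / G.Z p x

/-- The `k`-way Cheeger constant `h_k`. -/
def cheegerConst (k : ℕ) : ℝ :=
  sInf {c : ℝ | ∃ S : Fin k → Finset (Fin N),
    (∀ i, (S i).Nonempty) ∧ (∀ i j, i ≠ j → Disjoint (S i) (S j)) ∧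
    c = ⨆ i, G.conductance (S i)}

end SubmodularHypergraph

/-- There is an odd continuous map `h : A → ℝ^k ∖ {0}`. -/
def genusLE {N : ℕ} (A : Set (Fin N → ℝ)) (k : ℕ) : Prop :=
  ∃ h : (Fin N → ℝ) → (Fin k → ℝ),
    ContinuousOn h A ∧ (∀ x ∈ A, h (-x) = -h x) ∧ ∀ x ∈ A, h x ≠ 0

/-- The Krasnoselski genus of a set. -/
def genus {N : ℕ} (A : Set (Fin N → ℝ)) : ℕ∞ :=
  sInf ((fun n : ℕ => (n : ℕ∞)) '' {n | genusLE A n})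

namespace SubmodularHypergraph

variable {N : ℕ} (G : SubmodularHypergraph N)

/-- The `k`-th variational eigenvalue `λ_k^{(p)}` of `△_p`:
`min` over closed symmetric `A ⊆ S_{p,μ}` with `γ(A) ≥ k` of `max_{x ∈ A} Q_p(x)`. -/
def varEigen (p : ℝ) (k : ℕ) : ℝ :=
  sInf ((fun A : Set (Fin N → ℝ) => sSup (G.Q p '' A)) ''
    {A | IsClosed A ∧ (∀ x ∈ A, -x ∈ A) ∧
         A ⊆ {x | G.normLpPow p x = 1} ∧ (k : ℕ∞) ≤ genus A})

end SubmodularHypergraph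

open MeasureTheory intervalIntegral in
lemma lovasz_eq_sum {n : ℕ} (F : Finset (Fin (n+1)) → ℝ) (x : Fin (n+1) → ℝ)
    (σ : Equiv.Perm (Fin (n+1))) (hm : Monotone (x ∘ σ)) :
    lovasz F x = ∑ k ∈ Finset.range n,
      F (Finset.univ.filter fun v => k < (σ.symm v : ℕ)) *
        (x (σ ⟨min (k+1) n, by omega⟩) - x (σ ⟨min k n, by omega⟩)) := by
  set a : ℕ → ℝ := fun k => x (σ ⟨min k n, by omega⟩) with ha
  have hamono : ∀ i j : ℕ, i ≤ j → a i ≤ a j := by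
    intro i j hij
    refine hm ?_
    rw [Fin.le_def]
    exact (by omega : min i n ≤ min j n)
  have hlevel : ∀ k < n, ∀ t ∈ Set.Ioo (a k) (a (k+1)),
      (Finset.univ.filter fun v => t < x v) =
      (Finset.univ.filter fun v => k < (σ.symm v : ℕ)) := by
    intro k hk t ht
    apply Finset.filter_congr
    intro v _
    constructor
    · intro hlt
      by_contra hc
      push_neg at hc
      have hle : σ.symm v ≤ (⟨min k n, by omega⟩ : Fin (n+1)) := by
        rw [Fin.le_def]
        exact (by omega : (σ.symm v : ℕ) ≤ min k n)
      have h2 := hm hle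
      simp only [Function.comp_apply, Equiv.apply_symm_apply] at h2
      exact absurd hlt (not_lt.2 (h2.trans ht.1.le))
    · intro hlt
      have hle : (⟨min (k+1) n, by omega⟩ : Fin (n+1)) ≤ σ.symm v := by
        rw [Fin.le_def]
        exact (by omega : min (k+1) n ≤ (σ.symm v : ℕ))
      have h2 := hm hle
      simp only [Function.comp_apply, Equiv.apply_symm_apply] at h2
      exact ht.2.trans_le h2
  have hbad : ∀ k < n, ∀ᵐ t : ℝ, t ∈ Set.uIoc (a k) (a (k+1)) →
      F (Finset.univ.filter fun v => t < x v) =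
      F (Finset.univ.filter fun v => k < (σ.symm v : ℕ)) := by
    intro k hk
    rw [MeasureTheory.ae_iff]
    refine measure_mono_null (fun t ht => ?_) (Real.volume_singleton (a := a (k+1)))
    simp only [Set.mem_setOf_eq, Classical.not_imp] at ht
    obtain ⟨ht1, ht2⟩ := ht
    rw [Set.uIoc_of_le (hamono k (k+1) (by omega))] at ht1
    by_contra hne
    have hIoo : t ∈ Set.Ioo (a k) (a (k+1)) :=
      ⟨ht1.1, lt_of_le_of_ne ht1.2 (by simpa using hne)⟩
    exact ht2 (by rw [hlevel k hk t hIoo])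
  have hint : ∀ k < n, IntervalIntegrable
      (fun t => F (Finset.univ.filter fun v => t < x v)) volume (a k) (a (k+1)) := by
    intro k hk
    exact (_root_.intervalIntegrable_const
        (c := F (Finset.univ.filter fun v => k < (σ.symm v : ℕ)))).congr_ae
      ((ae_restrict_iff' measurableSet_uIoc).2 ((hbad k hk).mono fun t h ht => (h ht).symm))
  have hinf : (⨅ v, x v) = a 0 := by
    apply le_antisymm
    · exact ciInf_le (Set.Finite.bddBelow (Set.finite_range x)) (σ ⟨min 0 n, by omega⟩)
    · refine le_ciInf fun v => ?_
      have hv : x v = (x ∘ σ) (σ.symm v) := by simp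
      rw [hv]
      refine hm ?_
      rw [Fin.le_def]
      exact (by omega : min 0 n ≤ (σ.symm v : ℕ))
  have hsup : (⨆ v, x v) = a n := by
    apply le_antisymm
    · refine ciSup_le fun v => ?_
      have hv : x v = (x ∘ σ) (σ.symm v) := by simp
      rw [hv]
      refine hm ?_
      rw [Fin.le_def]
      exact (by omega : (σ.symm v : ℕ) ≤ min n n)
    · exact le_ciSup (Set.Finite.bddAbove (Set.finite_range x)) (σ ⟨min n n, by omega⟩)
  rw [lovasz, hinf, hsup, ← intervalIntegral.sum_integral_adjacent_intervals hint]
  refine Finset.sum_congr rfl fun k hk => ?_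
  rw [Finset.mem_range] at hk
  rw [intervalIntegral.integral_congr_ae (hbad k hk), intervalIntegral.integral_const,
    smul_eq_mul, mul_comm]

lemma lovasz_comb {n : ℕ} (F : Finset (Fin (n+1)) → ℝ) (x x' : Fin (n+1) → ℝ)
    (σ : Equiv.Perm (Fin (n+1))) (hm' : Monotone (x' ∘ σ)) (hm : Monotone (x ∘ σ))
    (s t : ℝ) (hc : Monotone ((fun v => s * x' v + t * x v) ∘ σ)) :
    lovasz F (fun v => s * x' v + t * x v) = s * lovasz F x' + t * lovasz F x := by
  rw [lovasz_eq_sum F _ σ hc, lovasz_eq_sum F x' σ hm', lovasz_eq_sum F x σ hm,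
    Finset.mul_sum, Finset.mul_sum, ← Finset.sum_add_distrib]
  exact Finset.sum_congr rfl fun k _ => by ring

/-- If `x ⇀ x′` (i.e. `x_u > x_v` implies `x′_u > x′_v`), then
`∇f(x′) ⊆ ∇f(x)` and `⟨y, x⟩ = f(x)` for every `y ∈ ∇f(x′)`. -/
theorem stmt2 {N : ℕ} (F : Finset (Fin N) → ℝ) (hsub : Submodular F)
    (hV : F Finset.univ = 0) (x x' : Fin N → ℝ)
    (hdom : ∀ u v : Fin N, x v < x u → x' v < x' u) :
    subgradients (lovasz F) x' ⊆ subgradients (lovasz F) x ∧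
    ∀ y ∈ subgradients (lovasz F) x', dotp y x = lovasz F x := by
  obtain _ | n := N
  · have hf : ∀ z : Fin 0 → ℝ, lovasz F z = 0 := by
      intro z
      simp [lovasz, Real.iInf_of_isEmpty, Real.iSup_of_isEmpty]
    constructor
    · intro y _ z
      simp [dotp, hf]
    · intro y _
      simp [dotp, hf]
  · set σ : Equiv.Perm (Fin (n+1)) := Tuple.sort x' with hσ
    have hm' : Monotone (x' ∘ σ) := Tuple.monotone_sort x'
    have hm : Monotone (x ∘ σ) := by
      intro i j hij
      have h1 := hm' hij
      by_contra h
      push_neg at h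
      exact absurd (hdom (σ i) (σ j) h) (not_lt.2 h1)
    -- the large coefficient
    set s₀ : ℝ := 1 + ∑ p : Fin (n+1) × Fin (n+1), max 0 ((x p.2 - x p.1) / (x' p.2 - x' p.1))
      with hs₀
    have hs₀pair : ∀ u v : Fin (n+1), x' u < x' v → x v - x u ≤ s₀ * (x' v - x' u) := by
      intro u v huv
      have hpos : 0 < x' v - x' u := sub_pos.2 huv
      have hterm : (x v - x u) / (x' v - x' u) ≤ s₀ := by
        have h0 : ∀ p ∈ (Finset.univ : Finset (Fin (n+1) × Fin (n+1))), (0:ℝ) ≤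
            max 0 ((x p.2 - x p.1) / (x' p.2 - x' p.1)) := fun p _ => le_max_left _ _
        have h1 := Finset.single_le_sum h0 (Finset.mem_univ (u, v))
        have h2 : (x v - x u) / (x' v - x' u) ≤
            max 0 ((x v - x u) / (x' v - x' u)) := le_max_right _ _
        rw [hs₀]
        calc (x v - x u) / (x' v - x' u) ≤ _ := h2.trans h1
          _ ≤ _ := by linarith
      exact (div_le_iff₀ hpos).1 hterm
    have hcomb : ∀ s t : ℝ, Monotone ((fun v => s * x' v + t * x v) ∘ σ) →
        lovasz F (fun v => s * x' v + t * x v) = s * lovasz F x' + t * lovasz F x :=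
      fun s t hc => lovasz_comb F x x' σ hm' hm s t hc
    have hmono_pos : ∀ s t : ℝ, 0 ≤ s → 0 ≤ t →
        Monotone ((fun v => s * x' v + t * x v) ∘ σ) := by
      intro s t hs ht i j hij
      have h1 := hm' hij
      have h2 := hm hij
      simp only [Function.comp_apply] at h1 h2 ⊢
      nlinarith
    have hmono₀ : Monotone ((fun v => s₀ * x' v + (-1) * x v) ∘ σ) := by
      intro i j hij
      have h1 := hm' hij
      have h2 := hm hij
      simp only [Function.comp_apply] at h1 h2 ⊢
      rcases eq_or_lt_of_le h1 with heq | hlt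
      · have h3 : ¬ x (σ i) < x (σ j) := fun hx =>
          absurd (hdom (σ j) (σ i) hx) (by rw [heq]; exact lt_irrefl _)
      -- x (σ i) = x (σ j)
        have heqx : x (σ i) = x (σ j) := le_antisymm h2 (not_lt.1 h3)
        rw [heq, heqx]
      · have h4 := hs₀pair (σ i) (σ j) hlt
        linarith
    set f := lovasz F with hf
    -- ⟨y,x'⟩ = f x'
    have hdotp_sub : ∀ y z w : Fin (n+1) → ℝ, dotp y (z - w) = dotp y z - dotp y w := by
      intro y z w
      rw [dotp, dotp, dotp, ← Finset.sum_sub_distrib]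
      exact Finset.sum_congr rfl fun v _ => by simp [Pi.sub_apply]; ring
    have hdx' : ∀ y ∈ subgradients f x', dotp y x' = f x' := by
      intro y hy
      have t1 := hy (fun v => (2:ℝ) * x' v + 0 * x v)
      have t0 := hy (fun v => (0:ℝ) * x' v + 0 * x v)
      rw [hcomb 2 0 (hmono_pos 2 0 (by norm_num) le_rfl)] at t1
      rw [hcomb 0 0 (hmono_pos 0 0 le_rfl le_rfl)] at t0
      rw [hdotp_sub] at t1 t0
      have e1 : dotp y (fun v => (2:ℝ) * x' v + 0 * x v) = 2 * dotp y x' := by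
        rw [dotp, dotp, Finset.mul_sum]
        exact Finset.sum_congr rfl fun v _ => by ring
      have e0 : dotp y (fun v => (0:ℝ) * x' v + 0 * x v) = 0 := by
        rw [dotp]
        exact Finset.sum_eq_zero fun v _ => by ring
      rw [e1] at t1
      rw [e0] at t0
      linarith
    have hdx : ∀ y ∈ subgradients f x', dotp y x = f x := by
      intro y hy
      have hyx' := hdx' y hy
      have t1 := hy (fun v => (1:ℝ) * x' v + 1 * x v)
      have t2 := hy (fun v => s₀ * x' v + (-1) * x v)
      rw [hcomb 1 1 (hmono_pos 1 1 zero_le_one zero_le_one)] at t1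
      rw [hcomb s₀ (-1) hmono₀] at t2
      rw [hdotp_sub] at t1 t2
      have e1 : dotp y (fun v => (1:ℝ) * x' v + 1 * x v) = dotp y x' + dotp y x := by
        rw [dotp, dotp, dotp, ← Finset.sum_add_distrib]
        exact Finset.sum_congr rfl fun v _ => by ring
      have e2 : dotp y (fun v => s₀ * x' v + (-1) * x v) = s₀ * dotp y x' - dotp y x := by
        rw [dotp, dotp, dotp, Finset.mul_sum, ← Finset.sum_sub_distrib]
        exact Finset.sum_congr rfl fun v _ => by ring
      rw [e1] at t1
      rw [e2, hyx'] at t2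
      exact le_antisymm (by linarith) (by linarith)
    refine ⟨?_, hdx⟩
    intro y hy
    intro z
    have h1 := hy z
    have hyx' := hdx' y hy
    have hyx := hdx y hy
    rw [hdotp_sub] at h1 ⊢
    linarith
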